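/- Let T > 0, γ > 0, ζ ∈ ℝ, and define θ0(s) := (1 + ζ·exp(2γ(T−s)))/(1 − ζ·exp(2γ(T−s))) and Ψ0(t,s) := exp(−2γ(s−t))·((ζ·exp(2γT) − exp(2γs))/(ζ·exp(2γT) − exp(2γt)))². Fix t ≤ T and assume ζ·exp(2γT) ≠ exp(2γs) for every s ∈ [t,T]. Then ∫_t^T θ0(s)²·Ψ0(t,s) ds = −[ exp(4γt) + exp(2γ(t+T))·(ζ² + 4γζ(t−T) − 1) − ζ²·exp(4γT) ] / (2γ·(exp(2γt) − ζ·exp(2γT))²). -/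

import Mathlib

open Real Set MeasureTheory

lemma aux_ptwise (a b c ζ : ℝ) (ha : a ≠ 0) (hb : b ≠ 0) (h1 : b - ζ * c ≠ 0)
    (h2 : ζ * c - a ≠ 0) :
    ((1 + ζ * (c / b)) / (1 - ζ * (c / b))) ^ 2 *
      ((a / b) * ((ζ * c - b) / (ζ * c - a)) ^ 2)
    = a / (ζ * c - a) ^ 2 *
      (b + 2 * (ζ * c) + (ζ * c) ^ 2 * (1 / b)) := by
  have hd1 : 1 - ζ * (c / b) ≠ 0 := by
    have : 1 - ζ * (c / b) = (b - ζ * c) / b := by field_simp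
    rw [this]
    exact div_ne_zero h1 hb
  field_simp
  ring

lemma aux_final (γ ζ t T a c : ℝ) (hγ : (2:ℝ) * γ ≠ 0) (ha : a ≠ 0) (hc : c ≠ 0)
    (hd : ζ * c - a ≠ 0) :
    a / (ζ * c - a) ^ 2 * (c / (2 * γ) + 2 * (ζ * c) * T - (ζ * c) ^ 2 * (1 / c) / (2 * γ))
    - a / (ζ * c - a) ^ 2 * (a / (2 * γ) + 2 * (ζ * c) * t - (ζ * c) ^ 2 * (1 / a) / (2 * γ))
    = -((a * a + a * c * (ζ ^ 2 + 4 * γ * ζ * (t - T) - 1) - ζ ^ 2 * (c * c)) /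
        (2 * γ * (a - ζ * c) ^ 2)) := by
  have h' : a - ζ * c ≠ 0 := fun h => hd (by linarith [sub_eq_zero.mp h])
  have hγ0 : γ ≠ 0 := fun h => hγ (by rw [h]; ring)
  field_simp
  ring

theorem stmt_8 (T γ ζ : ℝ) (hT : 0 < T) (hγ : 0 < γ)
    (θ0 : ℝ → ℝ)
    (hθ0 : ∀ s, θ0 s = (1 + ζ * Real.exp (2 * γ * (T - s))) /
                       (1 - ζ * Real.exp (2 * γ * (T - s))))
    (Ψ0 : ℝ → ℝ → ℝ)
    (hΨ0 : ∀ t s, Ψ0 t s = Real.exp (-2 * γ * (s - t)) *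
        ((ζ * Real.exp (2 * γ * T) - Real.exp (2 * γ * s)) /
         (ζ * Real.exp (2 * γ * T) - Real.exp (2 * γ * t))) ^ 2)
    (t : ℝ) (htT : t ≤ T)
    (hnd : ∀ s ∈ Set.Icc t T, ζ * Real.exp (2 * γ * T) ≠ Real.exp (2 * γ * s)) :
    ∫ s in t..T, (θ0 s) ^ 2 * Ψ0 t s =
      -((Real.exp (4 * γ * t)
          + Real.exp (2 * γ * (t + T)) * (ζ ^ 2 + 4 * γ * ζ * (t - T) - 1)
          - ζ ^ 2 * Real.exp (4 * γ * T)) /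
        (2 * γ * (Real.exp (2 * γ * t) - ζ * Real.exp (2 * γ * T)) ^ 2)) := by
  have hγ' : (2:ℝ) * γ ≠ 0 := by positivity
  have ha : (0:ℝ) < Real.exp (2 * γ * t) := Real.exp_pos _
  have hc : (0:ℝ) < Real.exp (2 * γ * T) := Real.exp_pos _
  have hd2 : ζ * Real.exp (2 * γ * T) - Real.exp (2 * γ * t) ≠ 0 :=
    sub_ne_zero.mpr (hnd t ⟨le_refl t, htT⟩)
  set A : ℝ := ζ * Real.exp (2 * γ * T) with hA
  set C : ℝ := Real.exp (2 * γ * t) / (A - Real.exp (2 * γ * t)) ^ 2 with hC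
  have key : Set.EqOn (fun s => (θ0 s) ^ 2 * Ψ0 t s)
      (fun s => C * (Real.exp (2 * γ * s) + 2 * A + A ^ 2 * (1 / Real.exp (2 * γ * s))))
      (Set.uIcc t T) := by
    intro s hs
    rw [Set.uIcc_of_le htT] at hs
    have hb : (0:ℝ) < Real.exp (2 * γ * s) := Real.exp_pos _
    have he1 : Real.exp (2 * γ * (T - s)) = Real.exp (2 * γ * T) / Real.exp (2 * γ * s) := by
      rw [show 2 * γ * (T - s) = 2 * γ * T - 2 * γ * s by ring, Real.exp_sub]
    have he2 : Real.exp (-2 * γ * (s - t)) = Real.exp (2 * γ * t) / Real.exp (2 * γ * s) := by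
      rw [show -2 * γ * (s - t) = 2 * γ * t - 2 * γ * s by ring, Real.exp_sub]
    have h1 : Real.exp (2 * γ * s) - ζ * Real.exp (2 * γ * T) ≠ 0 := by
      rw [hA] at hnd
      exact sub_ne_zero.mpr (Ne.symm (hnd s hs))
    simp only [hθ0, hΨ0, he1, he2, hC, hA]
    exact aux_ptwise (Real.exp (2 * γ * t)) (Real.exp (2 * γ * s)) (Real.exp (2 * γ * T)) ζ
      ha.ne' hb.ne' h1 hd2
  rw [intervalIntegral.integral_congr key]
  have hF : ∀ s : ℝ, HasDerivAt
      (fun s => C * (Real.exp (2 * γ * s) / (2 * γ) + 2 * A * s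
        - A ^ 2 * (1 / Real.exp (2 * γ * s)) / (2 * γ)))
      (C * (Real.exp (2 * γ * s) + 2 * A + A ^ 2 * (1 / Real.exp (2 * γ * s)))) s := by
    intro s
    have h1 : HasDerivAt (fun x : ℝ => Real.exp (2 * γ * x))
        (2 * γ * Real.exp (2 * γ * s)) s := by
      simpa [mul_comm, mul_one] using ((hasDerivAt_id s).const_mul (2 * γ)).exp
    have h2 : HasDerivAt (fun x : ℝ => 1 / Real.exp (2 * γ * x))
        (-(2 * γ * Real.exp (2 * γ * s)) / (Real.exp (2 * γ * s)) ^ 2) s := by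
      simpa [Pi.div_def] using (hasDerivAt_const s (1:ℝ)).div h1 (Real.exp_pos _).ne'
    have hE : (0:ℝ) < Real.exp (2 * γ * s) := Real.exp_pos _
    have := (((h1.div_const (2 * γ)).add ((hasDerivAt_id s).const_mul (2 * A))).sub
      ((h2.const_mul (A ^ 2)).div_const (2 * γ))).const_mul C
    refine this.congr_deriv ?_
    have hγ0 : γ ≠ 0 := hγ.ne'
    field_simp
    ring
  rw [intervalIntegral.integral_eq_sub_of_hasDerivAt (fun s _ => hF s)
    (by
      apply Continuous.intervalIntegrable
      have hinv : Continuous fun s : ℝ => 1 / Real.exp (2 * γ * s) :=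
        continuous_const.div (by continuity) fun x => (Real.exp_pos _).ne'
      exact continuous_const.mul (((Real.continuous_exp.comp (by continuity)).add
        continuous_const).add (continuous_const.mul hinv)))]
  have e1 : Real.exp (4 * γ * t) = Real.exp (2 * γ * t) * Real.exp (2 * γ * t) := by
    rw [← Real.exp_add]; ring_nf
  have e2 : Real.exp (4 * γ * T) = Real.exp (2 * γ * T) * Real.exp (2 * γ * T) := by
    rw [← Real.exp_add]; ring_nf
  have e3 : Real.exp (2 * γ * (t + T)) = Real.exp (2 * γ * t) * Real.exp (2 * γ * T) := by
    rw [← Real.exp_add]; ring_nf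
  simp only [hC, hA]
  rw [e1, e2, e3]
  exact aux_final γ ζ t T (Real.exp (2 * γ * t)) (Real.exp (2 * γ * T)) hγ' ha.ne' hc.ne' hd2
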